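/- The generating functions R_b satisfy the functional equation R_b(x) = (x^b/(1−2x^b)) · (Σ_{i=1}^{b−1} (2R_i(x) + H_i(x)) + H_b(x)) for all b ≥ 1. -/

import Mathlib

/-- `hFun b n` is the number of `(n,b)`-domino stacks, defined by the recurrence
`h_b(n) = Σ_{i=1}^{b} (2(b-i)+1) h_i(n-b)` with `h_b(b) = 1` and `h_b(n) = 0`
when `n < 1`, `b < 1`, or `n < b`. -/
def hFun : ℕ → ℕ → ℕ
  | b, n =>
    if b = 0 ∨ n ≤ b then (if n = b ∧ 1 ≤ b then 1 else 0)
    else ∑ i ∈ Finset.Icc 1 b, (2 * (b - i) + 1) * hFun i (n - b)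
termination_by b n => n
decreasing_by omega

/-- `rFun b n` is the number of right-skewed `(n,b)`-domino towers, defined by the
recurrence `r_b(n) = Σ_{i=1}^{b} (2 r_i(n-b) + h_i(n-b))` with `r_b(b+1) = 1` and
`r_b(n) = 0` for `n < 2`, `b < 1`, or `n < b+1`. -/
def rFun : ℕ → ℕ → ℕ
  | b, n =>
    if b = 0 ∨ n ≤ b + 1 then (if n = b + 1 ∧ 1 ≤ b then 1 else 0)
    else ∑ i ∈ Finset.Icc 1 b, (2 * rFun i (n - b) + hFun i (n - b))
termination_by b n => n
decreasing_by omega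


lemma hFun_zero (i : ℕ) : hFun i 0 = 0 := by
  rw [hFun]
  split
  · split <;> omega
  · omega

lemma rFun_zero (i : ℕ) : rFun i 0 = 0 := by
  rw [rFun]
  split
  · split <;> omega
  · omega

lemma rFun_one (i : ℕ) : rFun i 1 = 0 := by
  rw [rFun]
  split
  · split <;> omega
  · omega

lemma hFun_one (i : ℕ) : hFun i 1 = if i = 1 then 1 else 0 := by
  rw [hFun]
  split
  · split <;> split <;> omega
  · omega

lemma rFun_rec (b n : ℕ) (hb : 1 ≤ b) :
    rFun b n = 2 * rFun b (n - b) +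
      ((∑ i ∈ Finset.Icc 1 (b - 1), (2 * rFun i (n - b) + hFun i (n - b))) +
        hFun b (n - b)) := by
  obtain ⟨c, rfl⟩ : ∃ c, b = c + 1 := ⟨b - 1, by omega⟩
  have hc : c + 1 - 1 = c := by omega
  rw [hc]
  have hsplit : ∀ m : ℕ, ∑ i ∈ Finset.Icc 1 (c + 1), (2 * rFun i m + hFun i m) =
      (∑ i ∈ Finset.Icc 1 c, (2 * rFun i m + hFun i m)) +
        (2 * rFun (c + 1) m + hFun (c + 1) m) :=
    fun m => Finset.sum_Icc_succ_top (by omega) _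
  rw [rFun]
  split
  · rename_i h
    rcases Nat.lt_or_ge n (c + 1 + 1) with hn | hn
    · have h0 : n - (c + 1) = 0 := by omega
      rw [h0]
      have hz : ∀ i ∈ Finset.Icc 1 c, 2 * rFun i 0 + hFun i 0 = 0 := by
        intro i _; rw [rFun_zero, hFun_zero]
      rw [Finset.sum_congr rfl hz, Finset.sum_const_zero, rFun_zero, hFun_zero]
      split <;> omega
    · have hn1 : n = c + 1 + 1 := by omega
      have hm : n - (c + 1) = 1 := by omega
      rw [if_pos ⟨hn1, by omega⟩, hm, rFun_one, hFun_one]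
      have hsum : ∀ i ∈ Finset.Icc 1 c,
          2 * rFun i 1 + hFun i 1 = if i = 1 then 1 else 0 := by
        intro i _; simp [rFun_one, hFun_one]
      rw [Finset.sum_congr rfl hsum,
        Finset.sum_ite_eq' (Finset.Icc 1 c) 1 (fun _ => 1)]
      rcases Nat.eq_zero_or_pos c with h1 | h1
      · simp [h1]
      · rw [if_pos (by simp; omega), if_neg (by omega)]
  · rw [hsplit (n - (c + 1))]
    ring

open PowerSeries in
/-- The generating functions `R_b(x) = Σ_{n≥0} r_b(n) xⁿ` satisfy the functional equation
`R_b(x) = (x^b/(1-2x^b)) (Σ_{i=1}^{b-1} (2R_i(x) + H_i(x)) + H_b(x))` for all `b ≥ 1`. -/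
theorem right_skewed_genFun_eq (b : ℕ) (hb : 1 ≤ b) :
    PowerSeries.mk (fun n => (rFun b n : ℚ)) =
      (X : PowerSeries ℚ) ^ b * (1 - 2 * (X : PowerSeries ℚ) ^ b)⁻¹ *
        ((∑ i ∈ Finset.Icc 1 (b - 1),
            (2 * PowerSeries.mk (fun n => (rFun i n : ℚ)) +
              PowerSeries.mk (fun n => (hFun i n : ℚ)))) +
          PowerSeries.mk (fun n => (hFun b n : ℚ))) := by
  set S : PowerSeries ℚ :=
    (∑ i ∈ Finset.Icc 1 (b - 1),
        (2 * PowerSeries.mk (fun n => (rFun i n : ℚ)) +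
          PowerSeries.mk (fun n => (hFun i n : ℚ)))) +
      PowerSeries.mk (fun n => (hFun b n : ℚ)) with hS
  have hcS : ∀ m : ℕ, (coeff (R := ℚ) m) S =
      (∑ i ∈ Finset.Icc 1 (b - 1), (2 * (rFun i m : ℚ) + (hFun i m : ℚ))) +
        (hFun b m : ℚ) := by
    intro m
    simp [hS, coeff_mk, two_mul]
  have hunit : constantCoeff (R := ℚ) (1 - 2 * (X : PowerSeries ℚ) ^ b) ≠ 0 := by
    have h0 : constantCoeff (R := ℚ) ((X : PowerSeries ℚ) ^ b) = 0 := by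
      rw [map_pow, constantCoeff_X, zero_pow (by omega)]
    simp [h0]
  have hmul : (1 - 2 * (X : PowerSeries ℚ) ^ b) *
      PowerSeries.mk (fun n => (rFun b n : ℚ)) = (X : PowerSeries ℚ) ^ b * S := by
    ext n
    have expand : (1 - 2 * (X : PowerSeries ℚ) ^ b) *
        PowerSeries.mk (fun n => (rFun b n : ℚ)) =
        PowerSeries.mk (fun n => (rFun b n : ℚ)) -
          ((X : PowerSeries ℚ) ^ b * PowerSeries.mk (fun n => (rFun b n : ℚ)) +
           (X : PowerSeries ℚ) ^ b * PowerSeries.mk (fun n => (rFun b n : ℚ))) := by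
      ring
    rw [expand, map_sub, map_add, coeff_mk]
    simp only [coeff_X_pow_mul']
    have hrec := rFun_rec b n hb
    rcases Nat.lt_or_ge n b with hn | hn
    · rw [if_neg (by omega), if_neg (by omega)]
      have h0 : n - b = 0 := by omega
      have hr0 : rFun b n = 0 := by
        rw [hrec, h0]
        simp [rFun_zero, hFun_zero]
      simp [hr0]
    · rw [if_pos hn, if_pos hn, coeff_mk, hcS]
      have hq := congrArg (fun k : ℕ => (k : ℚ)) hrec
      push_cast at hq
      rw [hq]
      ring
  have key : PowerSeries.mk (fun n => (rFun b n : ℚ)) =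
      (1 - 2 * (X : PowerSeries ℚ) ^ b)⁻¹ * ((X : PowerSeries ℚ) ^ b * S) := by
    rw [← hmul, ← mul_assoc, PowerSeries.inv_mul_cancel _ hunit, one_mul]
  rw [key]
  ring
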